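/- For every A ∈ 𝓜, lim_{C↓1} U*(C, A) = U(log(A)); moreover for every C > 1 one has the two-sided bound (log C/(C−1))·U(log(A)) ≤ U*(C, A) ≤ 1 − (log C/(C−1))·(1 − U(log(A))). -/

import Mathlib

open MeasureTheory Filter Set Topology

noncomputable section

namespace UPN

/-- The half line `[0,∞)` viewed as a subset of `ℝ`. -/
def Ray : Set ℝ := Set.Ici 0

/-- The indicator function `1_A`. -/
def ind (A : Set ℝ) : ℝ → ℝ := Set.indicator A fun _ => (1 : ℝ)

/-- The collection `𝓜` of countable unions `⋃ᵢ [a_{2i-1}, a_{2i})` for a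
nondecreasing nonnegative sequence `a`. -/
def Mcal : Set (Set ℝ) :=
  {A | ∃ a : ℕ → ℝ, 0 ≤ a 0 ∧ Monotone a ∧
        A = ⋃ i : ℕ, Set.Ico (a (2 * i)) (a (2 * i + 1))}

/-- The density function `ρ_A`: `ρ_A(0) = 0` and `ρ_A(x) = (1/x)∫₀ˣ 1_A(y) dy`. -/
def rho (A : Set ℝ) (x : ℝ) : ℝ :=
  if x = 0 then 0 else (1 / x) * ∫ y in (0:ℝ)..x, ind A y

/-- The collection `𝓒` of elements of `𝓜` having natural density. -/
def Ccal : Set (Set ℝ) :=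
  {A | A ∈ Mcal ∧ ∃ l : ℝ, Tendsto (rho A) atTop (𝓝 l)}

/-- The natural density `λ(A) = lim_{x→∞} ρ_A(x)`. -/
def lam (A : Set ℝ) : ℝ := limUnder atTop (rho A)

/-- `S_A(x) = m(A ∩ [0,x))`. -/
def Sfn (A : Set ℝ) (x : ℝ) : ℝ := (volume (A ∩ Set.Ico 0 x)).toReal

/-- The thinning operation `A ∘ B = {x : x ∈ A ∧ S_A(x) ∈ B}`. -/
def thin (A B : Set ℝ) : Set ℝ := {x | x ∈ A ∧ Sfn A x ∈ B}

/-- An f-system on `[0,∞)`: a nonempty collection of subsets of `[0,∞)` closed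
under complements (in `[0,∞)`) and finite disjoint unions. -/
structure IsFSystem (F : Set (Set ℝ)) : Prop where
  nonempty : F.Nonempty
  subset_ray : ∀ A ∈ F, A ⊆ Ray
  compl_mem : ∀ A ∈ F, Ray \ A ∈ F
  union_mem : ∀ A ∈ F, ∀ B ∈ F, A ∩ B = ∅ → A ∪ B ∈ F

/-- A probability pair `(F, μ)` on `[0,∞)`: `F` is an f-system and `μ` is a finitely
additive probability measure on `F` with values in `[0,1]` and `μ([0,∞)) = 1`. -/
structure IsProbPair (F : Set (Set ℝ)) (μ : Set ℝ → ℝ) : Prop where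
  fsystem : IsFSystem F
  nonneg : ∀ A ∈ F, 0 ≤ μ A
  le_one : ∀ A ∈ F, μ A ≤ 1
  ray_eq_one : μ Ray = 1
  additive : ∀ A ∈ F, ∀ B ∈ F, A ∩ B = ∅ → μ (A ∪ B) = μ A + μ B

/-- A weakly thinnable pair (WTP). -/
structure IsWTP (F : Set (Set ℝ)) (μ : Set ℝ → ℝ) : Prop where
  pair : IsProbPair F μ
  Ccal_subset : Ccal ⊆ F
  subset_Mcal : F ⊆ Mcal
  P1 : ∀ C ∈ Ccal, ∀ A ∈ F, thin C A ∈ F ∧ μ (thin C A) = μ C * μ A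
  P2 : ∀ A ∈ F, ∀ B ∈ F, (∀ x : ℝ, Sfn B x ≤ Sfn A x) → μ B ≤ μ A
  P3 : ∀ c : ℝ, 0 ≤ c → μ (Set.Ici c) = 1

/-- Coherence of a probability measure `μ` on an f-system `F` on `[0,∞)`. -/
def Coherent (F : Set (Set ℝ)) (μ : Set ℝ → ℝ) : Prop :=
  ∀ (n : ℕ) (a : Fin n → ℝ) (A : Fin n → Set ℝ), (∀ i, A i ∈ F) →
    0 ≤ ⨆ x : Ray, ∑ i, a i * (ind (A i) ↑x - μ (A i))

/-- `σ_A(D,x) = (1/D) ∫_x^{x+D} 1_A(y) dy`. -/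
def sigmaFn (A : Set ℝ) (D x : ℝ) : ℝ := (1 / D) * ∫ y in x..(x + D), ind A y

/-- `U(A) = limsup_{D→∞} sup_{x>0} σ_A(D,x)`. -/
def Ufn (A : Set ℝ) : ℝ :=
  limsup (fun D => ⨆ x : Set.Ioi (0:ℝ), sigmaFn A D ↑x) atTop

/-- `L(A) = liminf_{D→∞} inf_{x>0} σ_A(D,x)`. -/
def Lfn (A : Set ℝ) : ℝ :=
  liminf (fun D => ⨅ x : Set.Ioi (0:ℝ), sigmaFn A D ↑x) atTop

/-- `𝓦^uni = {A ∈ 𝓜 : L(A) = U(A)}`. -/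
def Wuni : Set (Set ℝ) := {A | A ∈ Mcal ∧ Lfn A = Ufn A}

/-- `log(A) = {log a : a ∈ A ∩ [1,∞)}`. -/
def logSet (A : Set ℝ) : Set ℝ := Real.log '' (A ∩ Set.Ici 1)

/-- `𝓐^uni = {A ∈ 𝓜 : log(A) ∈ 𝓦^uni}`. -/
def Auni : Set (Set ℝ) := {A | A ∈ Mcal ∧ logSet A ∈ Wuni}

/-- `α(A) = λ(log(A))`. -/
def alphaFn (A : Set ℝ) : ℝ := lam (logSet A)

/-- `ξ_A(D,x) = (1/log D) ∫_x^{Dx} ρ_A(y)/y dy`. -/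
def xi (A : Set ℝ) (D x : ℝ) : ℝ :=
  (1 / Real.log D) * ∫ y in x..(D * x), rho A y / y

/-- Membership in `𝓟`: `s` is a sequence in `(1,∞)` tending to `∞` and `f` is a
sequence in `(1,∞)`. -/
def memP (s f : ℕ → ℝ) : Prop :=
  (∀ n, 1 < s n) ∧ Tendsto s atTop atTop ∧ ∀ n, 1 < f n

/-- `𝓐^{s,f} = {A ∈ 𝓜 : lim_n ξ_A(s_n,f_n) exists}`. -/
def Asf (s f : ℕ → ℝ) : Set (Set ℝ) :=
  {A | A ∈ Mcal ∧ ∃ l : ℝ, Tendsto (fun n => xi A (s n) (f n)) atTop (𝓝 l)}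

/-- `α^{s,f}(A) = lim_n ξ_A(s_n,f_n)`. -/
def alphasf (s f : ℕ → ℝ) (A : Set ℝ) : ℝ :=
  limUnder atTop fun n => xi A (s n) (f n)

/-- `τ_A(C,j)`; here `j : ℕ` starting from `0` corresponds to the interval
`[C^j, C^{j+1})`, i.e. to the paper's `τ_A(C, j+1)`. -/
def tau (A : Set ℝ) (C : ℝ) (j : ℕ) : ℝ :=
  (1 / (C ^ j * (C - 1))) * ∫ y in (C ^ j : ℝ)..(C ^ (j + 1)), ind A y

/-- `U^*(C,A) = limsup_{n→∞} sup_k (1/n) Σ_{j=k}^{k+n-1} τ_A(C,j)`. -/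
def Ustar (C : ℝ) (A : Set ℝ) : ℝ :=
  limsup (fun n : ℕ => ⨆ k : ℕ, (1 / (n : ℝ)) * ∑ i ∈ Finset.range n, tau A C (k + i)) atTop

lemma Mcal.measurableSet {A : Set ℝ} (hA : A ∈ Mcal) : MeasurableSet A := by
  obtain ⟨a, -, -, rfl⟩ := hA
  exact MeasurableSet.iUnion fun i => measurableSet_Ico

lemma logSet_eq (A : Set ℝ) : logSet A = Set.Ici 0 ∩ Real.exp ⁻¹' A := by
  ext t
  constructor
  · rintro ⟨a, ⟨haA, ha1⟩, rfl⟩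
    refine ⟨Real.log_nonneg ha1, ?_⟩
    rw [Set.mem_preimage, Real.exp_log (lt_of_lt_of_le one_pos ha1)]
    exact haA
  · rintro ⟨ht0, hta⟩
    exact ⟨Real.exp t, ⟨hta, Real.one_le_exp ht0⟩, Real.log_exp t⟩

lemma logSet_measurable {A : Set ℝ} (hA : MeasurableSet A) : MeasurableSet (logSet A) := by
  rw [logSet_eq]; exact measurableSet_Ici.inter (hA.preimage Real.measurable_exp)

lemma ind_nonneg (S : Set ℝ) (y : ℝ) : 0 ≤ ind S y := Set.indicator_nonneg (fun _ _ => zero_le_one) y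

lemma ind_le_one (S : Set ℝ) (y : ℝ) : ind S y ≤ 1 :=
  Set.indicator_le' (fun _ _ => le_rfl) (fun _ _ => zero_le_one) y

lemma intervalIntegrable_ind {S : Set ℝ} (hS : MeasurableSet S) (a b : ℝ) :
    IntervalIntegrable (ind S) volume a b := by
  rw [intervalIntegrable_iff, IntegrableOn, ind, integrable_indicator_iff hS]
  refine integrableOn_const (ne_of_lt ?_) (by simp)
  rw [Measure.restrict_apply hS]
  refine lt_of_le_of_lt (measure_mono Set.inter_subset_right) ?_
  rw [Set.uIoc, Real.volume_Ioc]
  exact ENNReal.ofReal_lt_top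

lemma integral_ind {S : Set ℝ} (hS : MeasurableSet S) {a b : ℝ} (hab : a ≤ b) :
    ∫ y in a..b, ind S y = (volume (S ∩ Set.Ioc a b)).toReal := by
  rw [intervalIntegral.integral_of_le hab, ind, MeasureTheory.setIntegral_indicator hS]
  rw [MeasureTheory.setIntegral_const, smul_eq_mul, mul_one, Set.inter_comm]
  rfl

lemma exp_image_eq {T : Set ℝ} {a b : ℝ} (hT : T ⊆ Set.Ioc a b) :
    Real.exp '' T = Set.Ioc (Real.exp a) (Real.exp b) ∩ Real.log ⁻¹' T := by
  ext y
  constructor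
  · rintro ⟨t, htT, rfl⟩
    have := hT htT
    exact ⟨⟨Real.exp_lt_exp.2 this.1, Real.exp_le_exp.2 this.2⟩, by
      rw [Set.mem_preimage, Real.log_exp]; exact htT⟩
  · rintro ⟨⟨h1, h2⟩, h3⟩
    have hy : 0 < y := lt_trans (Real.exp_pos a) h1
    exact ⟨Real.log y, h3, Real.exp_log hy⟩

lemma volume_exp_image {T : Set ℝ} (hT : MeasurableSet T) {a b : ℝ}
    (hTsub : T ⊆ Set.Ioc a b) :
    Real.exp a * (volume T).toReal ≤ (volume (Real.exp '' T)).toReal ∧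
    (volume (Real.exp '' T)).toReal ≤ Real.exp b * (volume T).toReal := by
  have hTfin : volume T < ⊤ :=
    lt_of_le_of_lt (measure_mono hTsub) (by rw [Real.volume_Ioc]; exact ENNReal.ofReal_lt_top)
  have himg : MeasurableSet (Real.exp '' T) := by
    rw [exp_image_eq hTsub]
    exact measurableSet_Ioc.inter (hT.preimage Real.measurable_log)
  have himgfin : volume (Real.exp '' T) < ⊤ := by
    rw [exp_image_eq hTsub]
    exact lt_of_le_of_lt (measure_mono Set.inter_subset_left)
      (by rw [Real.volume_Ioc]; exact ENNReal.ofReal_lt_top)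
  have key : ∫ x in Real.exp '' T, (1:ℝ) = ∫ x in T, |Real.exp x| • (1:ℝ) :=
    integral_image_eq_integral_abs_deriv_smul hT
      (fun x _ => (Real.hasDerivAt_exp x).hasDerivWithinAt)
      (Real.exp_injective.injOn) (fun _ => (1:ℝ))
  have key2 : (volume (Real.exp '' T)).toReal = ∫ x in T, Real.exp x := by
    have := key
    simp only [smul_eq_mul, mul_one] at this
    rw [MeasureTheory.setIntegral_const, smul_eq_mul, mul_one] at this
    rw [show (volume (Real.exp '' T)).toReal = volume.real (Real.exp '' T) from rfl, this]
    congr 1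
    ext x
    exact abs_of_pos (Real.exp_pos x)
  have hint : IntegrableOn Real.exp T volume := by
    have : IntegrableOn Real.exp (Set.Ioc a b) volume :=
      (Real.continuous_exp.continuousOn).integrableOn_Icc.mono_set Set.Ioc_subset_Icc_self
    exact this.mono_set hTsub
  have hconst : ∀ c : ℝ, IntegrableOn (fun _ => c) T volume := fun c =>
    integrableOn_const (ne_of_lt hTfin)
  constructor
  · rw [key2]
    calc Real.exp a * (volume T).toReal = ∫ _ in T, Real.exp a := by
          rw [MeasureTheory.setIntegral_const, smul_eq_mul, mul_comm]; rfl
      _ ≤ ∫ x in T, Real.exp x := by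
          apply MeasureTheory.setIntegral_mono_on (hconst _) hint hT
          intro x hx
          exact Real.exp_le_exp.2 (le_of_lt (hTsub hx).1)
  · rw [key2]
    calc (∫ x in T, Real.exp x) ≤ ∫ _ in T, Real.exp b := by
          apply MeasureTheory.setIntegral_mono_on hint (hconst _) hT
          intro x hx
          exact Real.exp_le_exp.2 (hTsub hx).2
      _ = Real.exp b * (volume T).toReal := by
          rw [MeasureTheory.setIntegral_const, smul_eq_mul, mul_comm]; rfl

lemma ind_compl_eq {S : Set ℝ} (y : ℝ) : ind Sᶜ y = 1 - ind S y := by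
  by_cases h : y ∈ S <;> simp [ind, Set.indicator_apply, h]

lemma integral_ind_interval_bounds {S : Set ℝ} (hS : MeasurableSet S) {a b : ℝ} (hab : a ≤ b) :
    0 ≤ (∫ y in a..b, ind S y) ∧ (∫ y in a..b, ind S y) ≤ b - a := by
  constructor
  · exact intervalIntegral.integral_nonneg hab (fun y _ => ind_nonneg S y)
  · calc (∫ y in a..b, ind S y) ≤ ∫ _ in a..b, (1:ℝ) :=
        intervalIntegral.integral_mono_on hab (intervalIntegrable_ind hS a b)
          intervalIntegrable_const (fun y _ => ind_le_one S y)
      _ = b - a := by simp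

lemma image_logSet_inter (A : Set ℝ) {s t : ℝ} (hs : 0 ≤ s) :
    Real.exp '' (logSet A ∩ Set.Ioc s t) = A ∩ Set.Ioc (Real.exp s) (Real.exp t) := by
  rw [logSet_eq]
  ext y
  constructor
  · rintro ⟨u, ⟨⟨-, huA⟩, hu⟩, rfl⟩
    exact ⟨huA, Real.exp_lt_exp.2 hu.1, Real.exp_le_exp.2 hu.2⟩
  · rintro ⟨hyA, hy1, hy2⟩
    have hy : 0 < y := lt_trans (Real.exp_pos s) hy1
    refine ⟨Real.log y, ⟨⟨?_, ?_⟩, ?_, ?_⟩, Real.exp_log hy⟩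
    · exact le_trans hs ((Real.le_log_iff_exp_le hy).2 hy1.le)
    · rw [Set.mem_preimage, Real.exp_log hy]; exact hyA
    · exact (Real.lt_log_iff_exp_lt hy).2 hy1
    · exact (Real.log_le_iff_le_exp hy).2 hy2

lemma image_diff_logSet (A : Set ℝ) {s t : ℝ} (hs : 0 ≤ s) :
    Real.exp '' ((logSet A)ᶜ ∩ Set.Ioc s t) = Aᶜ ∩ Set.Ioc (Real.exp s) (Real.exp t) := by
  rw [logSet_eq]
  ext y
  constructor
  · rintro ⟨u, ⟨huB, hu⟩, rfl⟩
    refine ⟨fun hyA => huB ⟨le_trans hs hu.1.le, hyA⟩, Real.exp_lt_exp.2 hu.1, Real.exp_le_exp.2 hu.2⟩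
  · rintro ⟨hyA, hy1, hy2⟩
    have hy : 0 < y := lt_trans (Real.exp_pos s) hy1
    refine ⟨Real.log y, ⟨?_, (Real.lt_log_iff_exp_lt hy).2 hy1,
      (Real.log_le_iff_le_exp hy).2 hy2⟩, Real.exp_log hy⟩
    rintro ⟨-, hmem⟩
    rw [Set.mem_preimage, Real.exp_log hy] at hmem
    exact hyA hmem

lemma tau_bounds {A : Set ℝ} (hA : MeasurableSet A) {C : ℝ} (hC : 1 < C) (j : ℕ) :
    (∫ y in ((j:ℝ) * Real.log C)..(((j:ℝ)+1) * Real.log C), ind (logSet A) y) / (C-1)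
      ≤ tau A C j ∧
    tau A C j ≤ 1 - (Real.log C -
      ∫ y in ((j:ℝ) * Real.log C)..(((j:ℝ)+1) * Real.log C), ind (logSet A) y) / (C-1) := by
  have hC0 : (0:ℝ) < C := lt_trans one_pos hC
  have hC1 : (0:ℝ) < C - 1 := sub_pos.2 hC
  set L := Real.log C with hLdef
  have hL : 0 < L := Real.log_pos hC
  have hB : MeasurableSet (logSet A) := logSet_measurable hA
  have hexpn : ∀ m : ℕ, Real.exp ((m:ℝ) * L) = C ^ m := fun m => by
    rw [Real.exp_nat_mul, Real.exp_log hC0]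
  have hjj : ((j:ℝ)) * L ≤ ((j:ℝ)+1) * L := by nlinarith
  have hj0 : (0:ℝ) ≤ (j:ℝ) * L := by positivity
  set P := (C:ℝ) ^ j with hPdef
  have hP : (0:ℝ) < P := pow_pos hC0 j
  have hPP : (C:ℝ) ^ (j+1) = P * C := pow_succ C j
  set sB := ∫ y in ((j:ℝ) * L)..(((j:ℝ)+1) * L), ind (logSet A) y with hsBdef
  set I := ∫ y in (C ^ j : ℝ)..(C ^ (j + 1)), ind A y with hIdef
  have hcast : (((j+1:ℕ)):ℝ) * L = ((j:ℝ)+1) * L := by push_cast; ring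
  have hsB_meas : sB = (volume (logSet A ∩ Set.Ioc ((j:ℝ)*L) (((j:ℝ)+1)*L))).toReal :=
    integral_ind hB hjj
  have hpowle : (C:ℝ) ^ j ≤ C ^ (j+1) := by
    rw [hPP]; nlinarith
  have hI_meas : I = (volume (A ∩ Set.Ioc ((C:ℝ)^j) ((C:ℝ)^(j+1)))).toReal :=
    integral_ind hA hpowle
  -- lower bound
  have himage : Real.exp '' (logSet A ∩ Set.Ioc ((j:ℝ)*L) (((j:ℝ)+1)*L))
      = A ∩ Set.Ioc ((C:ℝ)^j) ((C:ℝ)^(j+1)) := by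
    rw [image_logSet_inter A hj0, ← hexpn j, ← hexpn (j+1), hcast]
  have hvei := volume_exp_image (hB.inter measurableSet_Ioc)
    (Set.inter_subset_right : logSet A ∩ Set.Ioc ((j:ℝ)*L) (((j:ℝ)+1)*L) ⊆ _)
  rw [himage, hexpn j] at hvei
  have hlow : P * sB ≤ I := by
    rw [hsB_meas, hI_meas]; exact hvei.1
  -- complement bound
  have hcompl_int : (∫ y in (C ^ j : ℝ)..(C ^ (j + 1)), ind Aᶜ y) = (P * C - P) - I := by
    have : (ind Aᶜ) = fun y => 1 - ind A y := funext (fun y => ind_compl_eq y)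
    rw [this, intervalIntegral.integral_sub intervalIntegrable_const (intervalIntegrable_ind hA _ _)]
    rw [intervalIntegral.integral_const]
    rw [← hIdef, hPP]
    simp [smul_eq_mul]
    rfl
  have hcomplB_int : (∫ y in ((j:ℝ) * L)..(((j:ℝ)+1) * L), ind (logSet A)ᶜ y) = L - sB := by
    have : (ind (logSet A)ᶜ) = fun y => 1 - ind (logSet A) y := funext (fun y => ind_compl_eq y)
    rw [this, intervalIntegral.integral_sub intervalIntegrable_const (intervalIntegrable_ind hB _ _)]
    rw [intervalIntegral.integral_const, ← hsBdef]
    have : ((j:ℝ)+1) * L - (j:ℝ) * L = L := by ring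
    rw [this]
    simp [smul_eq_mul]
  have himage' : Real.exp '' ((logSet A)ᶜ ∩ Set.Ioc ((j:ℝ)*L) (((j:ℝ)+1)*L))
      = Aᶜ ∩ Set.Ioc ((C:ℝ)^j) ((C:ℝ)^(j+1)) := by
    rw [image_diff_logSet A hj0, ← hexpn j, ← hexpn (j+1), hcast]
  have hvei' := volume_exp_image (hB.compl.inter measurableSet_Ioc)
    (Set.inter_subset_right : (logSet A)ᶜ ∩ Set.Ioc ((j:ℝ)*L) (((j:ℝ)+1)*L) ⊆ _)
  rw [himage', hexpn j] at hvei'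
  have hupp : P * (L - sB) ≤ (P * C - P) - I := by
    rw [← hcompl_int]
    calc P * (L - sB) = C ^ j *
          (volume ((logSet A)ᶜ ∩ Set.Ioc ((j:ℝ)*L) (((j:ℝ)+1)*L))).toReal := by
          rw [hPdef]
          congr 1
          rw [← hcomplB_int, integral_ind hB.compl hjj]
      _ ≤ (volume (Aᶜ ∩ Set.Ioc ((C:ℝ)^j) ((C:ℝ)^(j+1)))).toReal := hvei'.1
      _ = ∫ y in (C ^ j : ℝ)..(C ^ (j + 1)), ind Aᶜ y := (integral_ind hA.compl hpowle).symm
  constructor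
  · have h1 : sB / (C-1) = (1/(P*(C-1))) * (P * sB) := by field_simp
    rw [tau, ← hIdef, ← hPdef, h1]
    exact mul_le_mul_of_nonneg_left hlow (by positivity)
  · have h2 : 1 - (L - sB)/(C-1) = (1/(P*(C-1))) * ((P*(C-1)) - P*(L - sB)) := by
      field_simp
    rw [tau, ← hIdef, ← hPdef, h2]
    apply mul_le_mul_of_nonneg_left _ (by positivity : (0:ℝ) ≤ 1/(P*(C-1)))
    nlinarith [hupp]

lemma sigma_nonneg {S : Set ℝ} {D : ℝ} (hD : 0 ≤ D) (x : ℝ) : 0 ≤ sigmaFn S D x := by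
  apply mul_nonneg (by positivity)
  exact intervalIntegral.integral_nonneg (by linarith) (fun y _ => ind_nonneg S y)

lemma sigma_le_one {S : Set ℝ} (hS : MeasurableSet S) {D : ℝ} (hD : 0 ≤ D) (x : ℝ) :
    sigmaFn S D x ≤ 1 := by
  rcases eq_or_lt_of_le hD with h | h
  · simp [sigmaFn, ← h]
  · rw [sigmaFn]
    have h2 := (integral_ind_interval_bounds hS (by linarith : x ≤ x + D)).2
    rw [div_mul_eq_mul_div, one_mul, div_le_one h]
    linarith

lemma tau_mem_Icc {A : Set ℝ} (hA : MeasurableSet A) {C : ℝ} (hC : 1 < C) (j : ℕ) :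
    0 ≤ tau A C j ∧ tau A C j ≤ 1 := by
  have hB := logSet_measurable hA
  have hL : 0 < Real.log C := Real.log_pos hC
  have hjj : ((j:ℝ)) * Real.log C ≤ ((j:ℝ)+1) * Real.log C := by nlinarith [Nat.cast_nonneg (α := ℝ) j]
  have hb := integral_ind_interval_bounds hB hjj
  have hC1 : (0:ℝ) < C - 1 := by linarith
  have ht := tau_bounds hA hC j
  constructor
  · exact le_trans (div_nonneg hb.1 hC1.le) ht.1
  · refine le_trans ht.2 ?_
    have : 0 ≤ (Real.log C - ∫ y in ((j:ℝ) * Real.log C)..(((j:ℝ)+1) * Real.log C),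
        ind (logSet A) y) / (C-1) := by
      apply div_nonneg _ hC1.le
      have := hb.2
      have heq : ((j:ℝ)+1) * Real.log C - (j:ℝ) * Real.log C = Real.log C := by ring
      linarith [heq ▸ this]
    linarith

lemma sum_sj {B : Set ℝ} (hB : MeasurableSet B) (L : ℝ) (k n : ℕ) :
    ∑ i ∈ Finset.range n, (∫ y in (((k+i:ℕ)):ℝ) * L..((((k+i:ℕ)):ℝ)+1) * L, ind B y)
      = ∫ y in ((k:ℝ) * L)..(((k:ℝ)+(n:ℝ)) * L), ind B y := by
  have key := intervalIntegral.sum_integral_adjacent_intervals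
    (a := fun i : ℕ => (((k+i:ℕ)):ℝ) * L) (n := n) (f := ind B) (μ := volume)
    (fun i _ => intervalIntegrable_ind hB _ _)
  calc ∑ i ∈ Finset.range n, (∫ y in (((k+i:ℕ)):ℝ) * L..((((k+i:ℕ)):ℝ)+1) * L, ind B y)
      = ∑ i ∈ Finset.range n, (∫ y in (((k+i:ℕ)):ℝ) * L..(((k+(i+1):ℕ)):ℝ) * L, ind B y) := by
        apply Finset.sum_congr rfl
        intro i _
        rw [show ((((k+i:ℕ)):ℝ)+1) * L = (((k+(i+1):ℕ)):ℝ) * L by push_cast; ring]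
    _ = ∫ y in (((k+0:ℕ)):ℝ) * L..(((k+n:ℕ)):ℝ) * L, ind B y := key
    _ = ∫ y in ((k:ℝ) * L)..(((k:ℝ)+(n:ℝ)) * L), ind B y := by
        rw [show (((k+0:ℕ)):ℝ) * L = (k:ℝ) * L by push_cast; ring,
          show (((k+n:ℕ)):ℝ) * L = ((k:ℝ)+(n:ℝ)) * L by push_cast; ring]

lemma avg_bounds {A : Set ℝ} (hA : MeasurableSet A) {C : ℝ} (hC : 1 < C) {n : ℕ} (hn : 1 ≤ n)
    (k : ℕ) :
    (Real.log C / (C-1)) * sigmaFn (logSet A) ((n:ℝ) * Real.log C) ((k:ℝ) * Real.log C)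
      ≤ (1/(n:ℝ)) * ∑ i ∈ Finset.range n, tau A C (k+i) ∧
    (1/(n:ℝ)) * ∑ i ∈ Finset.range n, tau A C (k+i)
      ≤ 1 - Real.log C / (C-1) +
        (Real.log C / (C-1)) * sigmaFn (logSet A) ((n:ℝ) * Real.log C) ((k:ℝ) * Real.log C) := by
  have hB := logSet_measurable hA
  have hL : 0 < Real.log C := Real.log_pos hC
  have hC1 : (0:ℝ) < C - 1 := by linarith
  have hn0 : (0:ℝ) < (n:ℝ) := by exact_mod_cast hn
  set L := Real.log C
  set S := ∫ y in ((k:ℝ) * L)..(((k:ℝ)+(n:ℝ)) * L), ind (logSet A) y with hSdef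
  have hsum_low : S / (C-1) ≤ ∑ i ∈ Finset.range n, tau A C (k+i) := by
    rw [hSdef, ← sum_sj hB L k n, Finset.sum_div]
    apply Finset.sum_le_sum
    intro i _
    exact (tau_bounds hA hC (k+i)).1
  have hsum_upp : ∑ i ∈ Finset.range n, tau A C (k+i)
      ≤ (n:ℝ) * (1 - L/(C-1)) + S / (C-1) := by
    calc ∑ i ∈ Finset.range n, tau A C (k+i)
        ≤ ∑ i ∈ Finset.range n, ((1 - L/(C-1)) +
            (∫ y in (((k+i:ℕ)):ℝ) * L..((((k+i:ℕ)):ℝ)+1) * L, ind (logSet A) y) / (C-1)) := by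
          apply Finset.sum_le_sum
          intro i _
          have := (tau_bounds hA hC (k+i)).2
          have heq : 1 - (L - ∫ y in (((k+i:ℕ)):ℝ) * L..((((k+i:ℕ)):ℝ)+1) * L,
              ind (logSet A) y) / (C-1) = (1 - L/(C-1)) +
              (∫ y in (((k+i:ℕ)):ℝ) * L..((((k+i:ℕ)):ℝ)+1) * L, ind (logSet A) y) / (C-1) := by
            field_simp
            ring
          linarith [heq ▸ this]
      _ = (n:ℝ) * (1 - L/(C-1)) + S / (C-1) := by
          rw [Finset.sum_add_distrib, Finset.sum_const, Finset.card_range, ← Finset.sum_div,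
            sum_sj hB L k n, nsmul_eq_mul]
  have hSeq : S = ((n:ℝ) * L) * sigmaFn (logSet A) ((n:ℝ) * L) ((k:ℝ) * L) := by
    rw [sigmaFn]
    have h9 : (k:ℝ) * L + (n:ℝ) * L = ((k:ℝ)+(n:ℝ)) * L := by ring
    rw [h9, hSdef]
    field_simp
  set sig := sigmaFn (logSet A) ((n:ℝ) * L) ((k:ℝ) * L) with hsig
  constructor
  · calc L / (C-1) * sig = (1/(n:ℝ)) * (((n:ℝ) * L * sig)/(C-1)) := by field_simp
      _ ≤ (1/(n:ℝ)) * ∑ i ∈ Finset.range n, tau A C (k+i) := by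
          apply mul_le_mul_of_nonneg_left _ (by positivity)
          rw [← hSeq]
          exact hsum_low
  · calc (1/(n:ℝ)) * ∑ i ∈ Finset.range n, tau A C (k+i)
        ≤ (1/(n:ℝ)) * ((n:ℝ) * (1 - L/(C-1)) + ((n:ℝ) * L * sig) / (C-1)) := by
          apply mul_le_mul_of_nonneg_left _ (by positivity)
          rw [← hSeq]
          exact hsum_upp
      _ = 1 - L/(C-1) + L/(C-1) * sig := by field_simp

/-- auxiliary: sup of `σ` over positive starting points -/
def Gfn (B : Set ℝ) (D : ℝ) : ℝ := ⨆ x : Set.Ioi (0:ℝ), sigmaFn B D ↑x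

/-- auxiliary: sup of `σ` over grid windows -/
def Vfn (B : Set ℝ) (L : ℝ) (n : ℕ) : ℝ := ⨆ k : ℕ, sigmaFn B ((n:ℝ) * L) ((k:ℝ) * L)

/-- auxiliary: sup of averages of `τ` -/
def Wfn (A : Set ℝ) (C : ℝ) (n : ℕ) : ℝ :=
  ⨆ k : ℕ, (1 / (n : ℝ)) * ∑ i ∈ Finset.range n, tau A C (k + i)

lemma bddAbove_sigma_Ioi {B : Set ℝ} (hB : MeasurableSet B) {D : ℝ} (hD : 0 ≤ D) :
    BddAbove (Set.range fun x : Set.Ioi (0:ℝ) => sigmaFn B D ↑x) := by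
  refine ⟨1, ?_⟩
  rintro y ⟨x, rfl⟩
  exact sigma_le_one hB hD _

lemma bddAbove_sigma_grid {B : Set ℝ} (hB : MeasurableSet B) {L : ℝ} (hL : 0 ≤ L) (n : ℕ) :
    BddAbove (Set.range fun k : ℕ => sigmaFn B ((n:ℝ) * L) ((k:ℝ) * L)) := by
  refine ⟨1, ?_⟩
  rintro y ⟨k, rfl⟩
  exact sigma_le_one hB (by positivity) _

lemma Gfn_le_one {B : Set ℝ} (hB : MeasurableSet B) {D : ℝ} (hD : 0 ≤ D) : Gfn B D ≤ 1 :=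
  ciSup_le (fun x => sigma_le_one hB hD _)

lemma Gfn_nonneg {B : Set ℝ} (hB : MeasurableSet B) {D : ℝ} (hD : 0 ≤ D) : 0 ≤ Gfn B D :=
  le_trans (sigma_nonneg hD 1) (le_ciSup (bddAbove_sigma_Ioi hB hD) ⟨1, Set.mem_Ioi.2 one_pos⟩)

lemma Vfn_le_one {B : Set ℝ} (hB : MeasurableSet B) {L : ℝ} (hL : 0 ≤ L) (n : ℕ) :
    Vfn B L n ≤ 1 :=
  ciSup_le (fun k => sigma_le_one hB (by positivity) _)

lemma Vfn_nonneg {B : Set ℝ} (hB : MeasurableSet B) {L : ℝ} (hL : 0 ≤ L) (n : ℕ) :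
    0 ≤ Vfn B L n :=
  le_trans (sigma_nonneg (by positivity) _) (le_ciSup (bddAbove_sigma_grid hB hL n) 0)

lemma sigma_le_Gfn {B : Set ℝ} (hB : MeasurableSet B) {D x : ℝ} (hD : 0 ≤ D) (hx : 0 < x) :
    sigmaFn B D x ≤ Gfn B D :=
  le_ciSup (bddAbove_sigma_Ioi hB hD) (⟨x, hx⟩ : Set.Ioi (0:ℝ))

lemma sigma_le_Vfn {B : Set ℝ} (hB : MeasurableSet B) {L : ℝ} (hL : 0 ≤ L) (n k : ℕ) :
    sigmaFn B ((n:ℝ) * L) ((k:ℝ) * L) ≤ Vfn B L n :=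
  le_ciSup (bddAbove_sigma_grid hB hL n) k

/-- monotonicity of the window integral -/

lemma sigma_window_le {B : Set ℝ} (hB : MeasurableSet B) {u v D E : ℝ}
    (hD : 0 < D) (hE : 0 < E) (h1 : u ≤ v) (h2 : v + D ≤ u + E) :
    sigmaFn B D v ≤ (E / D) * sigmaFn B E u := by
  have hle : (∫ y in v..(v+D), ind B y) ≤ ∫ y in u..(u+E), ind B y := by
    have e1 : (∫ y in u..(u+E), ind B y)
        = (∫ y in u..v, ind B y) + (∫ y in v..(v+D), ind B y)
          + ∫ y in (v+D)..(u+E), ind B y := by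
      rw [intervalIntegral.integral_add_adjacent_intervals
        (intervalIntegrable_ind hB _ _) (intervalIntegrable_ind hB _ _),
        intervalIntegral.integral_add_adjacent_intervals
        (intervalIntegrable_ind hB _ _) (intervalIntegrable_ind hB _ _)]
    have p1 := (integral_ind_interval_bounds hB h1).1
    have p2 := (integral_ind_interval_bounds hB h2).1
    linarith
  rw [sigmaFn, sigmaFn]
  rw [show E / D * ((1/E) * ∫ y in u..(u+E), ind B y) = (1/D) * ∫ y in u..(u+E), ind B y by
    field_simp]
  apply mul_le_mul_of_nonneg_left hle (by positivity)

/-- `σ(D,0) ≤ G(D)` -/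

lemma sigma_zero_le_Gfn {B : Set ℝ} (hB : MeasurableSet B) {D : ℝ} (hD : 0 < D) :
    sigmaFn B D 0 ≤ Gfn B D := by
  apply le_of_forall_pos_le_add
  intro ε hε
  set x := min (ε * D) D with hxdef
  have hx : 0 < x := lt_min (by positivity) hD
  have hxD : x ≤ D := min_le_right _ _
  have hstep : sigmaFn B D 0 ≤ sigmaFn B D x + x / D := by
    have e1 : (∫ y in (0:ℝ)..(0+D), ind B y)
        = (∫ y in (0:ℝ)..x, ind B y) + ∫ y in x..D, ind B y := by
      rw [intervalIntegral.integral_add_adjacent_intervals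
        (intervalIntegrable_ind hB _ _) (intervalIntegrable_ind hB _ _)]
      norm_num
    have e2 : (∫ y in x..(x+D), ind B y)
        = (∫ y in x..D, ind B y) + ∫ y in D..(x+D), ind B y := by
      rw [intervalIntegral.integral_add_adjacent_intervals
        (intervalIntegrable_ind hB _ _) (intervalIntegrable_ind hB _ _)]
    have p1 := (integral_ind_interval_bounds hB hx.le).2
    have p2 := (integral_ind_interval_bounds hB (by linarith : D ≤ x + D)).1
    rw [sigmaFn, sigmaFn]
    have hfrac : (1/D) * (∫ y in (0:ℝ)..(0+D), ind B y)
        ≤ (1/D) * ((∫ y in x..(x+D), ind B y) + x) := by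
      apply mul_le_mul_of_nonneg_left _ (by positivity)
      linarith
    calc (1/D) * (∫ y in (0:ℝ)..(0+D), ind B y)
        ≤ (1/D) * ((∫ y in x..(x+D), ind B y) + x) := hfrac
      _ = (1/D) * (∫ y in x..(x+D), ind B y) + x / D := by ring
  calc sigmaFn B D 0 ≤ sigmaFn B D x + x / D := hstep
    _ ≤ Gfn B D + ε := by
        have h1 : sigmaFn B D x ≤ Gfn B D := sigma_le_Gfn hB hD.le hx
        have h2 : x / D ≤ ε := by
          rw [div_le_iff₀ hD]
          exact le_trans (min_le_left _ _) (by ring_nf; exact le_rfl)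
        linarith

lemma Vfn_le_Gfn {B : Set ℝ} (hB : MeasurableSet B) {L : ℝ} (hL : 0 < L) {n : ℕ} (hn : 1 ≤ n) :
    Vfn B L n ≤ Gfn B ((n:ℝ) * L) := by
  have hnL : 0 < (n:ℝ) * L := by
    have : (0:ℝ) < (n:ℝ) := by exact_mod_cast hn
    positivity
  apply ciSup_le
  intro k
  rcases Nat.eq_zero_or_pos k with rfl | hk
  · rw [show ((0:ℕ):ℝ) * L = 0 by norm_num]
    exact sigma_zero_le_Gfn hB hnL
  · have : (0:ℝ) < (k:ℝ) * L := by
      have : (0:ℝ) < (k:ℝ) := by exact_mod_cast hk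
      positivity
    exact sigma_le_Gfn hB hnL.le this

lemma Gfn_cover {B : Set ℝ} (hB : MeasurableSet B) {L : ℝ} (hL : 0 < L) {c : ℝ} (hc : 0 ≤ c)
    {N : ℕ} (hV : ∀ n : ℕ, N ≤ n → Vfn B L n ≤ c) {D : ℝ} (hND : (N:ℝ) * L ≤ D) (hD0 : 0 < D) :
    Gfn B D ≤ ((D + 2*L)/D) * c := by
  apply ciSup_le
  rintro ⟨x, hx⟩
  simp only
  have hx0 : (0:ℝ) < x := hx
  set k := ⌊x / L⌋₊ with hkdef
  set m := ⌈(x + D) / L⌉₊ with hmdef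
  have hkx : (k:ℝ) * L ≤ x := by
    have := Nat.floor_le (by positivity : (0:ℝ) ≤ x / L)
    calc (k:ℝ) * L ≤ (x / L) * L := by nlinarith
      _ = x := by field_simp
  have hxk : x < (k:ℝ) * L + L := by
    have := Nat.lt_floor_add_one (x / L)
    have h2 : x / L * L < ((k:ℝ) + 1) * L := by
      apply mul_lt_mul_of_pos_right this hL
    rw [div_mul_cancel₀ _ (ne_of_gt hL)] at h2
    nlinarith
  have hxDm : x + D ≤ (m:ℝ) * L := by
    have := Nat.le_ceil ((x + D) / L)
    have h2 : (x + D) / L * L ≤ (m:ℝ) * L := by nlinarith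
    rwa [div_mul_cancel₀ _ (ne_of_gt hL)] at h2
  have hmxD : (m:ℝ) * L < x + D + L := by
    have := Nat.ceil_lt_add_one (by positivity : (0:ℝ) ≤ (x + D) / L)
    have h2 : (m:ℝ) * L < ((x + D) / L + 1) * L := by nlinarith
    rw [add_mul, div_mul_cancel₀ _ (ne_of_gt hL), one_mul] at h2
    exact h2
  have hkm : k ≤ m := by
    have : (k:ℝ) * L < (m:ℝ) * L + L := by nlinarith
    have hcast : (k:ℝ) < (m:ℝ) + 1 := by nlinarith
    exact_mod_cast Nat.lt_add_one_iff.1 (by exact_mod_cast hcast)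
  set n := m - k with hndef
  have hnk : (n:ℝ) = (m:ℝ) - (k:ℝ) := by
    rw [hndef]
    push_cast [Nat.cast_sub hkm]
    ring
  have hnLD : D ≤ (n:ℝ) * L := by
    rw [hnk]; nlinarith
  have hnL2 : (n:ℝ) * L ≤ D + 2 * L := by
    rw [hnk]; nlinarith
  have hn0 : 0 < (n:ℝ) * L := lt_of_lt_of_le hD0 hnLD
  have hnN : N ≤ n := by
    have : (N:ℝ) * L ≤ (n:ℝ) * L := le_trans hND hnLD
    have : (N:ℝ) ≤ (n:ℝ) := by
      exact le_of_mul_le_mul_right (by nlinarith) hL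
    exact_mod_cast this
  have hwin : sigmaFn B D x ≤ (((n:ℝ) * L) / D) * sigmaFn B ((n:ℝ) * L) ((k:ℝ) * L) := by
    apply sigma_window_le hB hD0 hn0 hkx
    have : (k:ℝ) * L + (n:ℝ) * L = (m:ℝ) * L := by rw [hnk]; ring
    linarith
  have hsV : sigmaFn B ((n:ℝ) * L) ((k:ℝ) * L) ≤ c :=
    le_trans (sigma_le_Vfn hB hL.le n k) (hV n hnN)
  calc sigmaFn B D x ≤ (((n:ℝ) * L) / D) * sigmaFn B ((n:ℝ) * L) ((k:ℝ) * L) := hwin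
    _ ≤ ((D + 2*L)/D) * c := by
        have hdiv : ((n:ℝ) * L) / D ≤ (D + 2*L)/D := by gcongr
        exact mul_le_mul hdiv hsV (sigma_nonneg hn0.le _) (by positivity)

lemma bddV {B : Set ℝ} (hB : MeasurableSet B) {L : ℝ} (hL : 0 ≤ L) :
    IsBoundedUnder (· ≤ ·) (atTop : Filter ℕ) (Vfn B L) :=
  isBoundedUnder_of ⟨1, fun n => Vfn_le_one hB hL n⟩

lemma cobddV {B : Set ℝ} (hB : MeasurableSet B) {L : ℝ} (hL : 0 ≤ L) :
    IsCoboundedUnder (· ≤ ·) (atTop : Filter ℕ) (Vfn B L) :=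
  IsBoundedUnder.isCoboundedUnder_le (isBoundedUnder_of ⟨0, fun n => Vfn_nonneg hB hL n⟩)

lemma bddG {B : Set ℝ} (hB : MeasurableSet B) :
    IsBoundedUnder (· ≤ ·) (atTop : Filter ℝ) (Gfn B) :=
  by
  refine ⟨1, eventually_map.2 ?_⟩
  filter_upwards [eventually_ge_atTop (0:ℝ)] with D hD
  exact Gfn_le_one hB hD

lemma cobddG {B : Set ℝ} (hB : MeasurableSet B) :
    IsCoboundedUnder (· ≤ ·) (atTop : Filter ℝ) (Gfn B) :=
  by
  apply IsBoundedUnder.isCoboundedUnder_le (u := Gfn B)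
  refine ⟨0, eventually_map.2 ?_⟩
  filter_upwards [eventually_ge_atTop (0:ℝ)] with D hD
  exact Gfn_nonneg hB hD

lemma limsup_V_eq {B : Set ℝ} (hB : MeasurableSet B) {L : ℝ} (hL : 0 < L) :
    limsup (Vfn B L) atTop = limsup (Gfn B) atTop := by
  have htend : Tendsto (fun n : ℕ => (n:ℝ) * L) atTop atTop :=
    Tendsto.atTop_mul_const hL tendsto_natCast_atTop_atTop
  have step1 : limsup (Vfn B L) atTop ≤ limsup (fun n : ℕ => Gfn B ((n:ℝ)*L)) atTop := by
    refine limsup_le_limsup ?_ (cobddV hB hL.le)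
      (isBoundedUnder_of ⟨1, fun n => Gfn_le_one hB (by positivity)⟩)
    filter_upwards [eventually_ge_atTop 1] with n hn using Vfn_le_Gfn hB hL hn
  have step2 : limsup (fun n : ℕ => Gfn B ((n:ℝ)*L)) atTop
      = limsup (Gfn B) (map (fun n : ℕ => (n:ℝ)*L) atTop) := by
    rw [Filter.limsup, Filter.limsup, Filter.map_map]
    rfl
  have step3 : limsup (Gfn B) (map (fun n : ℕ => (n:ℝ)*L) atTop) ≤ limsup (Gfn B) atTop := by
    apply limsup_le_limsup_of_le htend _ (bddG hB)
    exact IsBoundedUnder.isCoboundedUnder_le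
      ⟨0, eventually_map.2 (eventually_map.2 (Eventually.of_forall
        (fun n => Gfn_nonneg hB (by positivity))))⟩
  apply le_antisymm
  · exact le_trans step1 (le_of_eq step2 |>.trans step3)
  · set M := limsup (Vfn B L) atTop with hM
    have hM0 : 0 ≤ M :=
      le_limsup_of_frequently_le (Frequently.of_forall (fun n => Vfn_nonneg hB hL.le n))
        (bddV hB hL.le)
    apply le_of_forall_pos_le_add
    intro ε hε
    have hev : ∀ᶠ n in atTop, Vfn B L n < M + ε :=
      eventually_lt_of_limsup_lt (by linarith) (bddV hB hL.le)
    obtain ⟨N, hN⟩ := eventually_atTop.1 hev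
    have key : ∀ᶠ D in (atTop : Filter ℝ), Gfn B D ≤ ((D + 2*L)/D) * (M + ε) := by
      filter_upwards [eventually_ge_atTop ((N:ℝ)*L), eventually_gt_atTop (0:ℝ)] with D h1 h2
      exact Gfn_cover hB hL (by linarith) (fun n hn => (hN n hn).le) h1 h2
    have htend2 : Tendsto (fun D : ℝ => ((D + 2*L)/D) * (M + ε)) atTop (𝓝 (M + ε)) := by
      have t0 : Tendsto (fun D : ℝ => 1 + 2*L/D) atTop (𝓝 (1+0)) :=
        tendsto_const_nhds.add (Tendsto.div_atTop tendsto_const_nhds tendsto_id)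
      have t1 : Tendsto (fun D : ℝ => (D + 2*L)/D) atTop (𝓝 1) := by
        rw [show (1:ℝ) = 1 + 0 by norm_num]
        apply t0.congr'
        filter_upwards [eventually_ne_atTop (0:ℝ)] with D hD
        field_simp
      simpa using t1.mul_const (M + ε)
    calc limsup (Gfn B) atTop ≤ limsup (fun D : ℝ => ((D + 2*L)/D) * (M + ε)) atTop :=
          limsup_le_limsup key (cobddG hB) htend2.isBoundedUnder_le
      _ = M + ε := htend2.limsup_eq

lemma avg_mem_Icc {A : Set ℝ} (hA : MeasurableSet A) {C : ℝ} (hC : 1 < C) (n k : ℕ) :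
    0 ≤ (1/(n:ℝ)) * ∑ i ∈ Finset.range n, tau A C (k+i) ∧
    (1/(n:ℝ)) * ∑ i ∈ Finset.range n, tau A C (k+i) ≤ 1 := by
  constructor
  · apply mul_nonneg (by positivity)
    exact Finset.sum_nonneg fun i _ => (tau_mem_Icc hA hC (k+i)).1
  · rcases Nat.eq_zero_or_pos n with rfl | hn
    · norm_num
    · have hn0 : (0:ℝ) < (n:ℝ) := by exact_mod_cast hn
      have hsum : ∑ i ∈ Finset.range n, tau A C (k+i) ≤ (n:ℝ) := by
        calc ∑ i ∈ Finset.range n, tau A C (k+i) ≤ ∑ _i ∈ Finset.range n, (1:ℝ) :=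
            Finset.sum_le_sum fun i _ => (tau_mem_Icc hA hC (k+i)).2
          _ = (n:ℝ) := by simp
      rw [div_mul_eq_mul_div, one_mul, div_le_one hn0]
      exact hsum

lemma bddAbove_avg {A : Set ℝ} (hA : MeasurableSet A) {C : ℝ} (hC : 1 < C) (n : ℕ) :
    BddAbove (Set.range fun k : ℕ => (1/(n:ℝ)) * ∑ i ∈ Finset.range n, tau A C (k+i)) := by
  refine ⟨1, ?_⟩
  rintro y ⟨k, rfl⟩
  exact (avg_mem_Icc hA hC n k).2

lemma Wfn_le_one {A : Set ℝ} (hA : MeasurableSet A) {C : ℝ} (hC : 1 < C) (n : ℕ) :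
    Wfn A C n ≤ 1 := ciSup_le fun k => (avg_mem_Icc hA hC n k).2

lemma Wfn_nonneg {A : Set ℝ} (hA : MeasurableSet A) {C : ℝ} (hC : 1 < C) (n : ℕ) :
    0 ≤ Wfn A C n :=
  le_trans (avg_mem_Icc hA hC n 0).1 (le_ciSup (bddAbove_avg hA hC n) 0)

lemma rV_le_W {A : Set ℝ} (hA : MeasurableSet A) {C : ℝ} (hC : 1 < C) {n : ℕ} (hn : 1 ≤ n) :
    (Real.log C / (C-1)) * Vfn (logSet A) (Real.log C) n ≤ Wfn A C n := by
  have hB := logSet_measurable hA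
  have hL : 0 < Real.log C := Real.log_pos hC
  have hr : 0 < Real.log C / (C-1) := by
    apply div_pos hL
    linarith
  have h : ∀ k : ℕ, (Real.log C / (C-1)) *
      sigmaFn (logSet A) ((n:ℝ) * Real.log C) ((k:ℝ) * Real.log C) ≤ Wfn A C n :=
    fun k => le_trans (avg_bounds hA hC hn k).1 (le_ciSup (bddAbove_avg hA hC n) k)
  have h2 : Vfn (logSet A) (Real.log C) n ≤ Wfn A C n / (Real.log C / (C-1)) := by
    apply ciSup_le
    intro k
    rw [le_div_iff₀ hr, mul_comm]
    exact h k
  calc (Real.log C / (C-1)) * Vfn (logSet A) (Real.log C) n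
      ≤ (Real.log C / (C-1)) * (Wfn A C n / (Real.log C / (C-1))) :=
        mul_le_mul_of_nonneg_left h2 hr.le
    _ = Wfn A C n := by
        rw [mul_comm, div_mul_cancel₀ _ (ne_of_gt hr)]

lemma W_le_affine {A : Set ℝ} (hA : MeasurableSet A) {C : ℝ} (hC : 1 < C) {n : ℕ} (hn : 1 ≤ n) :
    Wfn A C n ≤ 1 - Real.log C / (C-1) +
      (Real.log C / (C-1)) * Vfn (logSet A) (Real.log C) n := by
  have hB := logSet_measurable hA
  have hL : 0 < Real.log C := Real.log_pos hC
  have hr : 0 < Real.log C / (C-1) := div_pos hL (by linarith)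
  apply ciSup_le
  intro k
  refine le_trans (avg_bounds hA hC hn k).2 ?_
  have := sigma_le_Vfn hB hL.le n k
  nlinarith

lemma limsup_affine {u : ℕ → ℝ} (hbd : IsBoundedUnder (· ≤ ·) (atTop : Filter ℕ) u)
    (hcob : IsCoboundedUnder (· ≤ ·) (atTop : Filter ℕ) u) {a b : ℝ} (hb : 0 ≤ b) :
    limsup (fun n => a + b * u n) atTop = a + b * limsup u atTop := by
  have hmono : Monotone (fun z : ℝ => a + b * z) :=
    fun z w h => add_le_add le_rfl (mul_le_mul_of_nonneg_left h hb)
  have h := hmono.map_limsup_of_continuousAt u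
    ((continuous_const.add (continuous_const.mul continuous_id)).continuousAt) hbd hcob
  have he : ((fun z : ℝ => a + b * z) ∘ u) = fun n => a + b * u n := rfl
  rw [he] at h
  exact h.symm

lemma Ustar_bounds' {A : Set ℝ} (hA : MeasurableSet A) {C : ℝ} (hC : 1 < C) :
    (Real.log C / (C-1)) * limsup (Gfn (logSet A)) atTop ≤ limsup (Wfn A C) atTop ∧
    limsup (Wfn A C) atTop ≤ 1 - Real.log C / (C-1) +
      (Real.log C / (C-1)) * limsup (Gfn (logSet A)) atTop := by
  have hB := logSet_measurable hA
  have hL : 0 < Real.log C := Real.log_pos hC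
  have hr : 0 < Real.log C / (C-1) := div_pos hL (by linarith)
  set r := Real.log C / (C-1) with hrdef
  set V := Vfn (logSet A) (Real.log C) with hV
  have hbdW : IsBoundedUnder (· ≤ ·) (atTop : Filter ℕ) (Wfn A C) :=
    isBoundedUnder_of ⟨1, fun n => Wfn_le_one hA hC n⟩
  have hcobW : IsCoboundedUnder (· ≤ ·) (atTop : Filter ℕ) (Wfn A C) :=
    IsBoundedUnder.isCoboundedUnder_le (isBoundedUnder_of ⟨0, fun n => Wfn_nonneg hA hC n⟩)
  have haff0 : limsup (fun n => (0:ℝ) + r * V n) atTop = 0 + r * limsup V atTop :=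
    limsup_affine (bddV hB hL.le) (cobddV hB hL.le) hr.le
  have haff1 : limsup (fun n => (1 - r) + r * V n) atTop = (1 - r) + r * limsup V atTop :=
    limsup_affine (bddV hB hL.le) (cobddV hB hL.le) hr.le
  constructor
  · have h1 : limsup (fun n => (0:ℝ) + r * V n) atTop ≤ limsup (Wfn A C) atTop := by
      refine limsup_le_limsup ?_ ?_ hbdW
      · filter_upwards [eventually_ge_atTop 1] with n hn
        rw [zero_add]
        exact rV_le_W hA hC hn
      · apply IsBoundedUnder.isCoboundedUnder_le
        apply isBoundedUnder_of
        refine ⟨0, fun n => ?_⟩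
        have := Vfn_nonneg hB hL.le n
        rw [← hV] at this
        nlinarith
    rw [haff0, zero_add] at h1
    rwa [limsup_V_eq hB hL] at h1
  · have h2 : limsup (Wfn A C) atTop ≤ limsup (fun n => (1 - r) + r * V n) atTop := by
      refine limsup_le_limsup ?_ hcobW ?_
      · filter_upwards [eventually_ge_atTop 1] with n hn
        exact W_le_affine hA hC hn
      · exact isBoundedUnder_of ⟨1 - r + r, fun n => by
          have := Vfn_le_one hB hL.le n
          nlinarith⟩
    rw [haff1] at h2
    rwa [limsup_V_eq hB hL] at h2

/-- For every `A ∈ 𝓜`, `lim_{C↓1} U^*(C,A) = U(log(A))`, together with the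
two-sided bound `(log C/(C−1))·U(log A) ≤ U^*(C,A) ≤ 1 − (log C/(C−1))·(1 − U(log A))`
for every `C > 1`. -/
theorem stmt13 (A : Set ℝ) (hA : A ∈ Mcal) :
    Tendsto (fun C => Ustar C A) (𝓝[>] (1:ℝ)) (𝓝 (Ufn (logSet A))) ∧
    ∀ C : ℝ, 1 < C →
      (Real.log C / (C - 1)) * Ufn (logSet A) ≤ Ustar C A ∧
      Ustar C A ≤ 1 - (Real.log C / (C - 1)) * (1 - Ufn (logSet A)) := by
  have hAm : MeasurableSet A := Mcal.measurableSet hA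
  have hU : Ufn (logSet A) = limsup (Gfn (logSet A)) atTop := rfl
  have hUs : ∀ C : ℝ, Ustar C A = limsup (Wfn A C) atTop := fun C => rfl
  have part2 : ∀ C : ℝ, 1 < C →
      (Real.log C / (C - 1)) * Ufn (logSet A) ≤ Ustar C A ∧
      Ustar C A ≤ 1 - (Real.log C / (C - 1)) * (1 - Ufn (logSet A)) := by
    intro C hC
    obtain ⟨h1, h2⟩ := Ustar_bounds' hAm hC
    rw [← hU] at h1 h2
    rw [hUs C]
    refine ⟨h1, ?_⟩
    have : (Real.log C / (C - 1)) * (1 - Ufn (logSet A))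
        = Real.log C / (C - 1) - (Real.log C / (C - 1)) * Ufn (logSet A) := by ring
    linarith
  refine ⟨?_, part2⟩
  have hslope : Tendsto (fun C : ℝ => Real.log C / (C - 1)) (𝓝[>] (1:ℝ)) (𝓝 1) := by
    have hd := Real.hasDerivAt_log one_ne_zero
    rw [hasDerivAt_iff_tendsto_slope] at hd
    have hmono : (𝓝[>] (1:ℝ)) ≤ (𝓝[≠] (1:ℝ)) :=
      nhdsWithin_mono _ (fun x hx => ne_of_gt hx)
    have hd2 := hd.mono_left hmono
    rw [inv_one] at hd2
    refine Tendsto.congr' ?_ hd2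
    filter_upwards [self_mem_nhdsWithin] with C hC
    rw [slope_def_field, Real.log_one, sub_zero]
  set U := Ufn (logSet A) with hUdef
  have hlow : Tendsto (fun C : ℝ => (Real.log C / (C - 1)) * U) (𝓝[>] (1:ℝ)) (𝓝 U) := by
    simpa using hslope.mul_const U
  have hupp : Tendsto (fun C : ℝ => 1 - (Real.log C / (C - 1)) * (1 - U)) (𝓝[>] (1:ℝ))
      (𝓝 U) := by
    have h := Tendsto.sub (tendsto_const_nhds : Tendsto (fun _ : ℝ => (1:ℝ)) (𝓝[>] (1:ℝ)) (𝓝 1))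
      (hslope.mul_const (1 - U))
    simpa using h
  apply tendsto_of_tendsto_of_tendsto_of_le_of_le' hlow hupp
  · filter_upwards [self_mem_nhdsWithin] with C hC using (part2 C hC).1
  · filter_upwards [self_mem_nhdsWithin] with C hC using (part2 C hC).2

end UPN
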